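/- arXiv:1208.5354 — 2 statements merged into one kernel-verified Lean document; each statement's English description precedes it below -/
import Mathlib

section
/- The map X ↦ V(X) is an order isomorphism from the set of finite divisor-closed subsets of ℕ (ordered by inclusion) onto the set of varieties of distributive rotational lattices (ordered by inclusion): every variety of distributive rotational lattices equals V(X) for a unique finite divisor-closed X, and V(X) ⊆ V(Y) iff X ⊆ Y. -/
/-- Terms in the signature `(⊔, ⊓, g)` with variables in `ℕ`. -/
inductive RTerm : Type
  | var : ℕ → RTerm
  | sup : RTerm → RTerm → RTerm
  | inf : RTerm → RTerm → RTerm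
  | rot : RTerm → RTerm

/-- Evaluation of a term in a raw algebra `(A; s, i, g)` of the signature. -/
def RTerm.eval {A : Type*} (s i : A → A → A) (g : A → A) (v : ℕ → A) : RTerm → A
  | .var k => v k
  | .sup t₁ t₂ => s (t₁.eval s i g v) (t₂.eval s i g v)
  | .inf t₁ t₂ => i (t₁.eval s i g v) (t₂.eval s i g v)
  | .rot t => g (t.eval s i g v)

/-- The algebra `(A; s, i, g)` satisfies the identity `e.1 ≈ e.2`. -/
def Sat {A : Type*} (s i : A → A → A) (g : A → A) (e : RTerm × RTerm) : Prop :=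
  ∀ v : ℕ → A, e.1.eval s i g v = e.2.eval s i g v

/-- `(A; s, i, g)` is a distributive rotational lattice: `s, i` are the join and
meet of a distributive lattice and `g` is an automorphism of finite order. -/
def IsDistRotLat {A : Type*} (s i : A → A → A) (g : A → A) : Prop :=
  (∀ x y, s x y = s y x) ∧ (∀ x y z, s (s x y) z = s x (s y z)) ∧
  (∀ x y, i x y = i y x) ∧ (∀ x y z, i (i x y) z = i x (i y z)) ∧
  (∀ x y, s x (i x y) = x) ∧ (∀ x y, i x (s x y) = x) ∧
  (∀ x y z, i x (s y z) = s (i x y) (i x z)) ∧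
  (∀ x y, g (s x y) = s (g x) (g y)) ∧ (∀ x y, g (i x y) = i (g x) (g y)) ∧
  Function.Bijective g ∧ (∃ n : ℕ, 0 < n ∧ g^[n] = id)

/-- The shift automorphism of the rotational cube `𝔅_n`. -/
def cubeShift (n : ℕ) : Set (ZMod n) → Set (ZMod n) :=
  fun S => (· + 1) '' S

/-- By Birkhoff's theorem, `(A; s, i, g)` belongs to the variety `V(X)` generated
by `{𝔅_n : n ∈ X}` iff it satisfies every identity valid in all generators. -/
def MemV (X : Set ℕ) {A : Type*} (s i : A → A → A) (g : A → A) : Prop :=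
  ∀ e : RTerm × RTerm,
    (∀ n ∈ X, Sat (· ∪ ·) (· ∩ ·) (cubeShift n) e) → Sat s i g e

/-- `X` is a finite divisor-closed set of positive integers. -/
def DivClosed (X : Set ℕ) : Prop :=
  X.Finite ∧ (∀ n ∈ X, 0 < n) ∧ ∀ x ∈ X, ∀ y : ℕ, y ∣ x → 0 < y → y ∈ X

namespace DRL

/-- eval commutes with homomorphisms. -/
lemma eval_hom {A B : Type*} {sA iA : A → A → A} {gA : A → A}
    {sB iB : B → B → B} {gB : B → B} {f : A → B}
    (hs : ∀ a b, f (sA a b) = sB (f a) (f b))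
    (hi : ∀ a b, f (iA a b) = iB (f a) (f b))
    (hg : ∀ a, f (gA a) = gB (f a)) (v : ℕ → A) :
    ∀ t : RTerm, f (t.eval sA iA gA v) = t.eval sB iB gB (f ∘ v) := by
  intro t
  induction t with
  | var k => rfl
  | sup t₁ t₂ ih₁ ih₂ => simp [RTerm.eval, hs, ih₁, ih₂]
  | inf t₁ t₂ ih₁ ih₂ => simp [RTerm.eval, hi, ih₁, ih₂]
  | rot t ih => simp [RTerm.eval, hg, ih]

lemma sat_of_injective {A B : Type*} {sA iA : A → A → A} {gA : A → A}
    {sB iB : B → B → B} {gB : B → B} {f : A → B}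
    (hf : Function.Injective f)
    (hs : ∀ a b, f (sA a b) = sB (f a) (f b))
    (hi : ∀ a b, f (iA a b) = iB (f a) (f b))
    (hg : ∀ a, f (gA a) = gB (f a))
    {e : RTerm × RTerm} (hSat : Sat sB iB gB e) : Sat sA iA gA e := by
  intro v
  apply hf
  rw [eval_hom hs hi hg, eval_hom hs hi hg]
  exact hSat _

lemma sat_of_surjective {A B : Type*} {sA iA : A → A → A} {gA : A → A}
    {sB iB : B → B → B} {gB : B → B} {f : A → B}
    (hf : Function.Surjective f)
    (hs : ∀ a b, f (sA a b) = sB (f a) (f b))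
    (hi : ∀ a b, f (iA a b) = iB (f a) (f b))
    (hg : ∀ a, f (gA a) = gB (f a))
    {e : RTerm × RTerm} (hSat : Sat sA iA gA e) : Sat sB iB gB e := by
  intro v
  choose w hw using hf
  have hv : v = f ∘ (fun k => w (v k)) := by funext k; simp [hw]
  rw [hv, ← eval_hom hs hi hg, ← eval_hom hs hi hg, hSat]

/-- Satisfaction in a Pi product. -/
lemma sat_pi {ι : Type*} {A : ι → Type*} (s i : ∀ j, A j → A j → A j) (g : ∀ j, A j → A j)
    {e : RTerm × RTerm} (h : ∀ j, Sat (s j) (i j) (g j) e) :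
    Sat (fun a b j => s j (a j) (b j)) (fun a b j => i j (a j) (b j))
      (fun a j => g j (a j)) e := by
  intro v
  funext j
  have key : ∀ t : RTerm, (t.eval (fun a b j => s j (a j) (b j)) (fun a b j => i j (a j) (b j))
      (fun a j => g j (a j)) v) j = t.eval (s j) (i j) (g j) (fun k => v k j) := by
    intro t
    induction t with
    | var k => rfl
    | sup t₁ t₂ ih₁ ih₂ => simp [RTerm.eval, ih₁, ih₂]
    | inf t₁ t₂ ih₁ ih₂ => simp [RTerm.eval, ih₁, ih₂]
    | rot t ih => simp [RTerm.eval, ih]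
  rw [key, key, h j _]

lemma cubeShift_mem {n : ℕ} (S : Set (ZMod n)) (z : ZMod n) :
    z ∈ cubeShift n S ↔ z - 1 ∈ S := by
  constructor
  · rintro ⟨w, hw, rfl⟩; simpa using hw
  · intro h; exact ⟨z - 1, h, by ring⟩

lemma cubeShift_iterate_mem {n : ℕ} (m : ℕ) (S : Set (ZMod n)) (z : ZMod n) :
    z ∈ (cubeShift n)^[m] S ↔ z - (m : ZMod n) ∈ S := by
  induction m generalizing z with
  | zero => simp
  | succ m ih =>
      rw [Function.iterate_succ_apply', cubeShift_mem, ih]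
      push_cast
      have : z - 1 - (m : ZMod n) = z - ((m : ZMod n) + 1) := by ring
      rw [this]

end DRL
namespace DRL

/-- For `d ∣ n`, satisfaction in `𝔅_n` implies satisfaction in `𝔅_d`. -/
lemma sat_cube_of_dvd {d n : ℕ} (hd : 0 < d) (hdn : d ∣ n) {e : RTerm × RTerm}
    (hSat : Sat (· ∪ ·) (· ∩ ·) (cubeShift n) e) :
    Sat (· ∪ ·) (· ∩ ·) (cubeShift d) e := by
  haveI : NeZero d := ⟨hd.ne'⟩
  set π : ZMod n →+* ZMod d := ZMod.castHom hdn (ZMod d) with hπ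
  have hπsurj : Function.Surjective π := by
    intro z
    obtain ⟨k, rfl⟩ := ZMod.natCast_zmod_surjective (n := d) z
    exact ⟨(k : ZMod n), by simp⟩
  refine sat_of_injective (f := fun S => π ⁻¹' S)
    (Function.Surjective.preimage_injective hπsurj) (fun a b => rfl) (fun a b => rfl) ?_ hSat
  intro S
  ext z
  simp only [Set.mem_preimage, cubeShift_mem, map_sub, map_one]

/-- `rot` iterated. -/
def rotIter : ℕ → RTerm → RTerm
  | 0, t => t
  | m + 1, t => .rot (rotIter m t)

lemma rotIter_eval {A : Type*} (s i : A → A → A) (g : A → A) (v : ℕ → A) (m : ℕ) (t : RTerm) :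
    (rotIter m t).eval s i g v = g^[m] (t.eval s i g v) := by
  induction m with
  | zero => rfl
  | succ m ih =>
      rw [rotIter, RTerm.eval, ih]
      exact (Function.iterate_succ_apply' g m _).symm

/-- big meet of `g^m x₀` over a list. -/
def listInf : RTerm → List ℕ → RTerm
  | b, [] => b
  | b, m :: l => .inf (rotIter m (.var 0)) (listInf b l)

lemma listInf_mem {n : ℕ} (v : ℕ → Set (ZMod n)) (m₀ : ℕ) (l : List ℕ) (z : ZMod n) :
    z ∈ (listInf (rotIter m₀ (.var 0)) l).eval (· ∪ ·) (· ∩ ·) (cubeShift n) v ↔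
      (z - (m₀ : ZMod n) ∈ v 0 ∧ ∀ m ∈ l, z - (m : ZMod n) ∈ v 0) := by
  induction l with
  | nil =>
      simp only [listInf, rotIter_eval, cubeShift_iterate_mem, List.not_mem_nil,
        false_implies, implies_true, and_true]
      rfl
  | cons m l ih =>
      simp only [listInf, RTerm.eval, Set.mem_inter_iff, rotIter_eval, cubeShift_iterate_mem,
        ih, List.mem_cons]
      constructor
      · rintro ⟨h1, h2, h3⟩
        exact ⟨h2, fun m' hm' => hm'.elim (fun h => h ▸ h1) (h3 m')⟩
      · rintro ⟨h1, h2⟩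
        exact ⟨h2 m (Or.inl rfl), h1, fun m' hm' => h2 m' (Or.inr hm')⟩

/-- The separating identity for `m₀ :: l`. -/
def sepIdent (m₀ : ℕ) (l : List ℕ) : RTerm × RTerm :=
  (listInf (rotIter m₀ (.var 0)) l, .inf (.var 0) (listInf (rotIter m₀ (.var 0)) l))

lemma sepIdent_sat {m' m₀ : ℕ} {l : List ℕ} (hm' : m' = m₀ ∨ m' ∈ l) :
    Sat (· ∪ ·) (· ∩ ·) (cubeShift m') (sepIdent m₀ l) := by
  intro v
  have hsub : ∀ z : ZMod m',
      z ∈ (listInf (rotIter m₀ (.var 0)) l).eval (· ∪ ·) (· ∩ ·) (cubeShift m') v → z ∈ v 0 := by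
    intro z hz
    rw [listInf_mem] at hz
    rcases hm' with rfl | hm'
    · simpa [ZMod.natCast_self] using hz.1
    · simpa [ZMod.natCast_self] using hz.2 m' hm'
  show _ = RTerm.eval _ _ _ v (RTerm.inf (.var 0) _)
  simp only [RTerm.eval]
  exact (Set.inter_eq_self_of_subset_right hsub).symm

lemma sepIdent_not_sat {n m₀ : ℕ} {l : List ℕ} (hn : 0 < n)
    (hm₀ : ¬ n ∣ m₀) (hl : ∀ m ∈ l, ¬ n ∣ m) :
    ¬ Sat (· ∪ ·) (· ∩ ·) (cubeShift n) (sepIdent m₀ l) := by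
  intro hSat
  have h := hSat (fun _ => {z : ZMod n | z ≠ 0})
  have h0 : (0 : ZMod n) ∈ (listInf (rotIter m₀ (.var 0)) l).eval (· ∪ ·) (· ∩ ·)
      (cubeShift n) (fun _ => {z : ZMod n | z ≠ 0}) := by
    rw [listInf_mem]
    constructor
    · simp only [Set.mem_setOf_eq, zero_sub, neg_ne_zero]
      rw [Ne, ZMod.natCast_eq_zero_iff]
      exact hm₀
    · intro m hm
      simp only [Set.mem_setOf_eq, zero_sub, neg_ne_zero]
      rw [Ne, ZMod.natCast_eq_zero_iff]
      exact hl m hm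
  simp only [sepIdent, RTerm.eval] at h
  rw [h] at h0
  exact h0.1 rfl

end DRL
namespace DRL

/-- Prime filter separation in a distributive lattice. -/
lemma exists_prime_filter {A : Type*} [DistribLattice A] {x y : A} (hxy : ¬ x ≤ y) :
    ∃ F : Set A, x ∈ F ∧ y ∉ F ∧
      (∀ a ∈ F, ∀ b, a ≤ b → b ∈ F) ∧
      (∀ a ∈ F, ∀ b ∈ F, a ⊓ b ∈ F) ∧
      (∀ a b, a ⊔ b ∈ F → a ∈ F ∨ b ∈ F) := by
  set 𝒞 : Set (Set A) := {G | x ∈ G ∧ y ∉ G ∧ (∀ a ∈ G, ∀ b, a ≤ b → b ∈ G) ∧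
      (∀ a ∈ G, ∀ b ∈ G, a ⊓ b ∈ G)} with h𝒞
  have hx0 : {a | x ≤ a} ∈ 𝒞 := by
    refine ⟨le_refl x, hxy, fun a ha b hab => le_trans ha hab, fun a ha b hb => le_inf ha hb⟩
  have hchain : ∀ c ⊆ 𝒞, IsChain (· ⊆ ·) c → c.Nonempty → ∃ ub ∈ 𝒞, ∀ s ∈ c, s ⊆ ub := by
    intro c hc hcC ⟨J, hJ⟩
    refine ⟨⋃₀ c, ⟨Set.mem_sUnion.2 ⟨J, hJ, (hc hJ).1⟩, ?_, ?_, ?_⟩,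
      fun s hs => Set.subset_sUnion_of_mem hs⟩
    · rintro ⟨G, hG, hyG⟩
      exact (hc hG).2.1 hyG
    · rintro a ⟨G, hG, haG⟩ b hab
      exact ⟨G, hG, (hc hG).2.2.1 a haG b hab⟩
    · rintro a ⟨G, hG, haG⟩ b ⟨G', hG', hbG'⟩
      rcases hcC.total hG hG' with h | h
      · exact ⟨G', hG', (hc hG').2.2.2 a (h haG) b hbG'⟩
      · exact ⟨G, hG, (hc hG).2.2.2 a haG b (h hbG')⟩
  obtain ⟨F, hsub, hmax⟩ := zorn_subset_nonempty 𝒞 hchain _ hx0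
  obtain ⟨hxF, hyF, hup, hinf⟩ := hmax.prop
  refine ⟨F, hxF, hyF, hup, hinf, ?_⟩
  intro a b hab
  by_contra hcon
  push_neg at hcon
  obtain ⟨haF, hbF⟩ := hcon
  -- the filter generated by F and a contains y
  have hgen : ∀ u : A, u ∉ F → ∃ w ∈ F, w ⊓ u ≤ y := by
    intro u huF
    set G : Set A := {c | ∃ w ∈ F, w ⊓ u ≤ c} with hG
    have hFG : F ⊆ G := fun c hc => ⟨c, hc, inf_le_left⟩
    have huG : u ∈ G := ⟨x, hxF, inf_le_right⟩
    have hGnotin : G ∉ 𝒞 := by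
      intro hGC
      exact huF (hmax.2 hGC hFG huG)
    by_contra hy
    push_neg at hy
    apply hGnotin
    refine ⟨hFG hxF, ?_, ?_, ?_⟩
    · rintro ⟨w, hwF, hwu⟩
      exact hy w hwF hwu
    · rintro c ⟨w, hwF, hwu⟩ b' hcb'
      exact ⟨w, hwF, le_trans hwu hcb'⟩
    · rintro c ⟨w, hwF, hwu⟩ c' ⟨w', hw'F, hw'u⟩
      exact ⟨w ⊓ w', hinf w hwF w' hw'F, by
        calc (w ⊓ w') ⊓ u ≤ (w ⊓ u) ⊓ (w' ⊓ u) := by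
              simp only [le_inf_iff]
              exact ⟨⟨inf_le_left.trans inf_le_left, inf_le_right⟩,
                ⟨inf_le_left.trans inf_le_right, inf_le_right⟩⟩
          _ ≤ c ⊓ c' := inf_le_inf hwu hw'u⟩
  obtain ⟨u, huF, hu⟩ := hgen a haF
  obtain ⟨v, hvF, hv⟩ := hgen b hbF
  have hw : (u ⊓ v) ⊓ (a ⊔ b) ∈ F := hinf _ (hinf u huF v hvF) _ hab
  have hle : (u ⊓ v) ⊓ (a ⊔ b) ≤ y := by
    rw [inf_sup_left]
    refine sup_le ?_ ?_
    · exact le_trans (inf_le_inf_right a inf_le_left) hu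
    · exact le_trans (inf_le_inf_right b inf_le_right) hv
  exact hyF (hup _ hw y hle)

end DRL
namespace DRL

lemma key_aux {A : Type*} [DistribLattice A] {g : A → A}
    (hgs : ∀ a b, g (a ⊔ b) = g a ⊔ g b)
    (hgi : ∀ a b, g (a ⊓ b) = g a ⊓ g b)
    {k : ℕ} (hk : 0 < k) (hgk : g^[k] = id)
    {x y : A} (hxy : ¬ x ≤ y) :
    ∃ d : ℕ, 0 < d ∧ ∃ φ : A → Set (ZMod d),
      (∀ a b, φ (a ⊔ b) = φ a ∪ φ b) ∧
      (∀ a b, φ (a ⊓ b) = φ a ∩ φ b) ∧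
      (∀ a, φ (g a) = cubeShift d (φ a)) ∧
      Function.Surjective φ ∧ (0 : ZMod d) ∈ φ x ∧ (0 : ZMod d) ∉ φ y := by
  classical
  -- the inverse h of g
  set h : A → A := g^[k - 1] with hh
  have hgh : ∀ a, g (h a) = a := by
    intro a
    have : g^[k - 1 + 1] a = g (g^[k - 1] a) := Function.iterate_succ_apply' g (k - 1) a
    rw [Nat.sub_add_cancel hk] at this
    rw [hh, ← this, hgk]; rfl
  have hhg : ∀ a, h (g a) = a := by
    intro a
    have : g^[k - 1 + 1] a = g^[k - 1] (g a) := Function.iterate_succ_apply g (k - 1) a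
    rw [Nat.sub_add_cancel hk] at this
    rw [hh, ← this, hgk]; rfl
  have hhgm : ∀ (m : ℕ) (a : A), h^[m] (g^[m] a) = a := by
    intro m
    induction m with
    | zero => intro a; rfl
    | succ m ih =>
        intro a
        rw [Function.iterate_succ_apply' g m a, Function.iterate_succ_apply h m,
          hhg, ih]
  -- h is a lattice homomorphism
  have hhs : ∀ a b, h (a ⊔ b) = h a ⊔ h b := by
    intro a b
    rw [hh]
    induction (k - 1) with
    | zero => rfl
    | succ m ih =>
        rw [Function.iterate_succ_apply' g m, Function.iterate_succ_apply' g m,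
          Function.iterate_succ_apply' g m, ih, hgs]
  have hhi : ∀ a b, h (a ⊓ b) = h a ⊓ h b := by
    intro a b
    rw [hh]
    induction (k - 1) with
    | zero => rfl
    | succ m ih =>
        rw [Function.iterate_succ_apply' g m, Function.iterate_succ_apply' g m,
          Function.iterate_succ_apply' g m, ih, hgi]
  have hhsm : ∀ (m : ℕ) (a b : A), h^[m] (a ⊔ b) = h^[m] a ⊔ h^[m] b := by
    intro m a b
    induction m generalizing a b with
    | zero => rfl
    | succ m ih => rw [Function.iterate_succ_apply, Function.iterate_succ_apply,
        Function.iterate_succ_apply, hhs, ih]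
  have hhim : ∀ (m : ℕ) (a b : A), h^[m] (a ⊓ b) = h^[m] a ⊓ h^[m] b := by
    intro m a b
    induction m generalizing a b with
    | zero => rfl
    | succ m ih => rw [Function.iterate_succ_apply, Function.iterate_succ_apply,
        Function.iterate_succ_apply, hhi, ih]
  -- h^[k] = id pointwise
  have hhk : ∀ a, h^[k] a = a := by
    intro a
    have h1 := hhgm k a
    rwa [hgk, id_eq] at h1
  -- prime filter separating x from y
  obtain ⟨F, hxF, hyF, hup, hinfF, hprime⟩ := exists_prime_filter hxy
  have hFinf : ∀ u w : A, u ⊓ w ∈ F ↔ u ∈ F ∧ w ∈ F := by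
    intro u w
    constructor
    · intro huw
      exact ⟨hup _ huw u inf_le_left, hup _ huw w inf_le_right⟩
    · rintro ⟨hu, hw⟩; exact hinfF u hu w hw
  have hFsup : ∀ u w : A, u ⊔ w ∈ F ↔ u ∈ F ∨ w ∈ F := by
    intro u w
    constructor
    · exact hprime u w
    · rintro (hu | hw)
      · exact hup _ hu _ le_sup_left
      · exact hup _ hw _ le_sup_right
  -- the period d
  set Pd : ℕ → Prop := fun t => 0 < t ∧ ∀ c, h^[t] c ∈ F ↔ c ∈ F with hPd
  have hPk : Pd k := ⟨hk, fun c => by rw [hhk]⟩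
  set d : ℕ := Nat.find ⟨k, hPk⟩ with hd
  obtain ⟨hd0, hdF⟩ : Pd d := Nat.find_spec ⟨k, hPk⟩
  have hdmin : ∀ t, 0 < t → t < d →
      ∃ c, (h^[t] c ∈ F ∧ c ∉ F) ∨ (h^[t] c ∉ F ∧ c ∈ F) := by
    intro t ht0 htd
    have h2 := Nat.find_min ⟨k, hPk⟩ htd
    simp only [hPd] at h2
    push_neg at h2
    exact h2 ht0
  haveI : NeZero d := ⟨hd0.ne'⟩
  -- invariance of F-membership under exponent shifts by multiples of d
  have hFmod : ∀ (m a : ℕ) (c : A), h^[a + m * d] c ∈ F ↔ h^[a] c ∈ F := by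
    intro m
    induction m with
    | zero => intro a c; simp
    | succ m ih =>
        intro a c
        have : a + (m + 1) * d = (a + m * d) + d := by ring
        rw [this, Function.iterate_add_apply h (a + m * d) d c, ih,
          ← Function.iterate_add_apply, Nat.add_comm a d, Function.iterate_add_apply, hdF]
  have hFmodeq : ∀ (a b : ℕ) (c : A), a % d = b % d → (h^[a] c ∈ F ↔ h^[b] c ∈ F) := by
    intro a b c hab
    have ha : a % d + a / d * d = a := Nat.mod_add_div' a d
    have hb : b % d + b / d * d = b := Nat.mod_add_div' b d
    rw [← ha, ← hb, hFmod, hFmod, hab]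
  -- the homomorphism φ
  set φ : A → Set (ZMod d) := fun c => {j : ZMod d | h^[j.val] c ∈ F} with hφ
  have hφnat : ∀ (c : A) (t : ℕ), ((t : ZMod d) ∈ φ c ↔ h^[t] c ∈ F) := by
    intro c t
    show h^[(t : ZMod d).val] c ∈ F ↔ _
    apply hFmodeq
    rw [ZMod.val_natCast]
    exact Nat.mod_mod_of_dvd t dvd_rfl
  -- `φ` is a homomorphism
  have hφmem : ∀ (c : A) (j : ZMod d), j ∈ φ c ↔ h^[j.val] c ∈ F := fun c j => Iff.rfl
  have hφi : ∀ a b, φ (a ⊓ b) = φ a ∩ φ b := by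
    intro a b
    ext j
    rw [Set.mem_inter_iff, hφmem, hφmem, hφmem, hhim, hFinf]
  have hφs : ∀ a b, φ (a ⊔ b) = φ a ∪ φ b := by
    intro a b
    ext j
    rw [Set.mem_union, hφmem, hφmem, hφmem, hhsm, hFsup]
  have hcast1 : ((d - 1 : ℕ) : ZMod d) = -1 := by
    rw [Nat.cast_sub (by omega : 1 ≤ d), ZMod.natCast_self, Nat.cast_one, zero_sub]
  have hφg : ∀ a, φ (g a) = cubeShift d (φ a) := by
    intro a
    ext j
    rw [cubeShift_mem, hφmem, hφmem]
    have e1 : h^[j.val] (g a) ∈ F ↔ h^[j.val + 1 * d] (g a) ∈ F := (hFmod 1 j.val (g a)).symm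
    have e2 : h^[j.val + 1 * d] (g a) = h^[j.val + (d - 1)] a := by
      have e : j.val + 1 * d = (j.val + (d - 1)) + 1 := by omega
      rw [e, Function.iterate_succ_apply, hhg]
    have e3 : ((j.val + (d - 1) : ℕ) : ZMod d) = j - 1 := by
      push_cast [hcast1, ZMod.natCast_zmod_val]
      ring
    rw [e1, e2]
    have e5 := hφnat a (j.val + (d - 1))
    rw [e3] at e5
    rw [← e5, hφmem]
  have hx0 : (0 : ZMod d) ∈ φ x := by
    rw [hφmem, ZMod.val_zero]
    exact hxF
  have hy0 : (0 : ZMod d) ∉ φ y := by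
    rw [hφmem, ZMod.val_zero]
    exact hyF
  refine ⟨d, hd0, φ, hφs, hφi, hφg, ?_, hx0, hy0⟩
  -- surjectivity of φ
  set B : Set (Set (ZMod d)) := Set.range φ with hB
  have hBint : ∀ S ∈ B, ∀ T ∈ B, S ∩ T ∈ B := by
    rintro S ⟨a, rfl⟩ T ⟨b, rfl⟩
    exact ⟨a ⊓ b, hφi a b⟩
  have hBun : ∀ S ∈ B, ∀ T ∈ B, S ∪ T ∈ B := by
    rintro S ⟨a, rfl⟩ T ⟨b, rfl⟩
    exact ⟨a ⊔ b, hφs a b⟩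
  have hBshiftIter : ∀ (m : ℕ), ∀ S ∈ B, (cubeShift d)^[m] S ∈ B := by
    intro m
    induction m with
    | zero => intro S hS; exact hS
    | succ m ih =>
        rintro S hS
        obtain ⟨a, ha⟩ := ih S hS
        rw [Function.iterate_succ_apply', ← ha, ← hφg]
        exact ⟨g a, rfl⟩
  have hBshiftInv : ∀ S ∈ B, {j : ZMod d | j + 1 ∈ S} ∈ B := by
    intro S hS
    have h1 := hBshiftIter (d - 1) S hS
    have h2 : (cubeShift d)^[d - 1] S = {j : ZMod d | j + 1 ∈ S} := by
      ext j
      rw [cubeShift_iterate_mem, Set.mem_setOf_eq, hcast1, sub_neg_eq_add]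
    rwa [h2] at h1
  have hcover : ∀ j : ZMod d, ∃ S ∈ B, j ∈ S := by
    intro j
    refine ⟨(cubeShift d)^[j.val] (φ x), hBshiftIter _ _ ⟨x, rfl⟩, ?_⟩
    rw [cubeShift_iterate_mem, ZMod.natCast_zmod_val, sub_self]
    exact hx0
  have hsep : ∀ j j' : ZMod d, j ≠ j' →
      ∃ S ∈ B, (j ∈ S ∧ j' ∉ S) ∨ (j ∉ S ∧ j' ∈ S) := by
    intro j j' hne
    set t : ℕ := (j' - j).val with ht
    have ht0 : 0 < t := by
      rcases Nat.eq_zero_or_pos t with h0 | h0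
      · exact absurd (sub_eq_zero.1 ((ZMod.val_eq_zero _).1 h0)).symm hne
      · exact h0
    have htd : t < d := ZMod.val_lt _
    obtain ⟨c, hc⟩ := hdmin t ht0 htd
    refine ⟨φ (g^[j.val] c), ⟨_, rfl⟩, ?_⟩
    have hj : j ∈ φ (g^[j.val] c) ↔ c ∈ F := by
      rw [hφmem, hhgm]
    have hj' : j' ∈ φ (g^[j.val] c) ↔ h^[t] c ∈ F := by
      rw [hφmem]
      have hmods : j'.val % d = (t + j.val) % d := by
        have hcasts : ((j'.val : ℕ) : ZMod d) = ((t + j.val : ℕ) : ZMod d) := by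
          push_cast
          simp only [ZMod.natCast_zmod_val]
          rw [ht, ZMod.natCast_zmod_val]
          ring
        exact (ZMod.natCast_eq_natCast_iff' _ _ _).1 hcasts
      rw [hFmodeq j'.val (t + j.val) _ hmods, Function.iterate_add_apply, hhgm]
    rcases hc with ⟨h1, h2⟩ | ⟨h1, h2⟩
    · exact Or.inr ⟨fun hjS => h2 (hj.1 hjS), hj'.2 h1⟩
    · exact Or.inl ⟨hj.2 h2, fun hj'S => h1 (hj'.1 hj'S)⟩
  have hsInter : ∀ 𝒯 : Set (Set (ZMod d)), 𝒯.Finite → 𝒯 ⊆ B → 𝒯.Nonempty → ⋂₀ 𝒯 ∈ B := by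
    intro 𝒯 hfin
    refine Set.Finite.induction_on _ hfin ?_ ?_
    · rintro _ ⟨S, hS⟩
      exact absurd hS (Set.notMem_empty S)
    · rintro a s ha hsfin ih hsub -
      rcases Set.eq_empty_or_nonempty s with rfl | hsne
      · simpa using hsub (Set.mem_insert a ∅)
      · rw [Set.sInter_insert]
        exact hBint _ (hsub (Set.mem_insert a s)) _
          (ih (fun T hT => hsub (Set.mem_insert_of_mem a hT)) hsne)
  have hsingle : ∀ j : ZMod d, ({j} : Set (ZMod d)) ∈ B := by
    intro j
    have h𝒮sub : {S : Set (ZMod d) | S ∈ B ∧ j ∈ S} ⊆ B := fun S hS => hS.1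
    have h𝒮ne : {S : Set (ZMod d) | S ∈ B ∧ j ∈ S}.Nonempty := by
      obtain ⟨S, hS, hj0⟩ := hcover j
      exact ⟨S, hS, hj0⟩
    have h1 : ⋂₀ {S : Set (ZMod d) | S ∈ B ∧ j ∈ S} ∈ B :=
      hsInter _ (Set.toFinite _) h𝒮sub h𝒮ne
    have h2 : ⋂₀ {S : Set (ZMod d) | S ∈ B ∧ j ∈ S} = {j} := by
      apply Set.eq_singleton_iff_unique_mem.2
      refine ⟨Set.mem_sInter.2 (fun S hS => hS.2), ?_⟩
      intro j' hj'
      by_contra hne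
      have HP : ∀ S ∈ B, j ∈ S → j' ∈ S :=
        fun S hS hj0 => Set.mem_sInter.1 hj' S ⟨hS, hj0⟩
      set P : ZMod d → ZMod d → Prop := fun a b => ∀ S ∈ B, b ∈ S → a ∈ S with hP
      have hPtrans : ∀ a b c : ZMod d, P a b → P b c → P a c :=
        fun a b c hab hbc S hS hc => hab S hS (hbc S hS hc)
      have hPshift : ∀ a b : ZMod d, P a b → P (a + 1) (b + 1) := by
        intro a b hab S hS hb1
        have hS' : {w : ZMod d | w + 1 ∈ S} ∈ B := hBshiftInv S hS
        exact hab _ hS' hb1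
      have hPshiftn : ∀ (m : ℕ) (a b : ZMod d), P a b → P (a + (m : ZMod d)) (b + (m : ZMod d)) := by
        intro m
        induction m with
        | zero => intro a b hab; simpa using hab
        | succ m ih =>
            intro a b hab
            have h3 := hPshift _ _ (ih a b hab)
            have e : ∀ z : ZMod d, z + ((m : ZMod d) + 1) = z + (m : ZMod d) + 1 := by
              intro z; ring
            push_cast
            rw [e, e]
            exact h3
      have hPshiftz : ∀ (w a b : ZMod d), P a b → P (a + w) (b + w) := by
        intro w a b hab
        rw [← ZMod.natCast_zmod_val w]
        exact hPshiftn w.val a b hab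
      set q : ZMod d := j' - j with hq
      have hq0 : q ≠ 0 := sub_ne_zero.2 hne
      have H : P (j + q) j := by
        rw [hq, add_sub_cancel]
        exact HP
      have hd2 : 2 ≤ d := by
        by_contra hlt
        apply hne
        have e1 : j'.val = 0 := by have := ZMod.val_lt j'; omega
        have e2 : j.val = 0 := by have := ZMod.val_lt j; omega
        rw [← ZMod.natCast_zmod_val j', ← ZMod.natCast_zmod_val j, e1, e2]
      have Hs : ∀ m : ℕ, P (j + ((m + 1 : ℕ) : ZMod d) * q) j := by
        intro m
        induction m with
        | zero => simpa using H
        | succ m ih =>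
            have step := hPshiftz (((m + 1 : ℕ) : ZMod d) * q) _ _ H
            have e : j + (((m + 1 + 1 : ℕ) : ZMod d)) * q = j + q + ((m + 1 : ℕ) : ZMod d) * q := by
              push_cast
              ring
            rw [e]
            exact hPtrans _ _ _ step ih
      have Hd : P (j - q) j := by
        have h4 := Hs (d - 2)
        have e : (d - 2 + 1 : ℕ) = d - 1 := by omega
        rw [e, hcast1] at h4
        simpa [neg_one_mul, sub_eq_add_neg] using h4
      have Hrev : P j j' := by
        have h5 := hPshiftz q _ _ Hd
        rw [sub_add_cancel, hq, add_sub_cancel] at h5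
        exact h5
      obtain ⟨S, hS, hxor⟩ := hsep j j' (fun hjj => hne hjj.symm)
      rcases hxor with ⟨hjS, hj'S⟩ | ⟨hjS, hj'S⟩
      · exact hj'S (HP S hS hjS)
      · exact hjS (Hrev S hS hj'S)
    rw [← h2]
    exact h1
  have hall : ∀ S : Set (ZMod d), S ∈ B := by
    rcases Nat.lt_or_ge d 2 with hd1 | hd2
    · intro S
      have hval : ∀ z : ZMod d, z = 0 := by
        intro z
        have := ZMod.val_lt z
        have h0 : z.val = 0 := by omega
        exact (ZMod.val_eq_zero z).1 h0
      by_cases h0 : (0 : ZMod d) ∈ S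
      · have : S = φ x := by
          ext z
          rw [hval z]
          simp only [h0, true_iff]
          exact hx0
        exact ⟨x, this.symm⟩
      · have : S = φ y := by
          ext z
          rw [hval z]
          constructor
          · intro hz; exact absurd hz h0
          · intro hz; exact absurd hz hy0
        exact ⟨y, this.symm⟩
    · have h01 : (0 : ZMod d) ≠ 1 := by
        haveI : Fact (1 < d) := ⟨hd2⟩
        exact zero_ne_one
      have hempty : (∅ : Set (ZMod d)) ∈ B := by
        have h6 := hBint _ (hsingle 0) _ (hsingle 1)
        have e : ({(0 : ZMod d)} : Set (ZMod d)) ∩ {1} = ∅ := by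
          ext z
          simp only [Set.mem_inter_iff, Set.mem_singleton_iff, Set.mem_empty_iff_false,
            iff_false, not_and]
          rintro rfl
          exact h01
        rwa [e] at h6
      intro S
      refine Set.Finite.induction_on _ (Set.toFinite S) hempty ?_
      rintro a s - - ih
      rw [Set.insert_eq]
      exact hBun _ (hsingle a) _ ih
  intro S
  exact hall S

end DRL
namespace DRL

lemma key {A : Type*} {s i : A → A → A} {g : A → A} (hDRL : IsDistRotLat s i g)
    {x y : A} (hne : x ≠ y) :
    ∃ d : ℕ, 0 < d ∧ ∃ φ : A → Set (ZMod d),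
      (∀ a b, φ (s a b) = φ a ∪ φ b) ∧
      (∀ a b, φ (i a b) = φ a ∩ φ b) ∧
      (∀ a, φ (g a) = cubeShift d (φ a)) ∧
      Function.Surjective φ ∧ φ x ≠ φ y := by
  obtain ⟨hsc, hsa, hic, hia, habs1, habs2, hdist, hgs, hgi, -, k, hk, hgk⟩ := hDRL
  letI : Max A := ⟨s⟩
  letI : Min A := ⟨i⟩
  letI : Lattice A := Lattice.mk' hsc hsa hic hia habs1 habs2
  letI : DistribLattice A := DistribLattice.ofInfSupLe (fun a b c => le_of_eq (hdist a b c))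
  rcases Classical.em (x ≤ y) with hxy | hxy
  · have hyx : ¬ y ≤ x := fun h => hne (le_antisymm hxy h)
    obtain ⟨d, hd0, φ, h1, h2, h3, h4, h5, h6⟩ := key_aux hgs hgi hk hgk hyx
    exact ⟨d, hd0, φ, h1, h2, h3, h4, fun hEq => h6 (by rw [hEq]; exact h5)⟩
  · obtain ⟨d, hd0, φ, h1, h2, h3, h4, h5, h6⟩ := key_aux hgs hgi hk hgk hxy
    exact ⟨d, hd0, φ, h1, h2, h3, h4, fun hEq => h6 (by rw [← hEq]; exact h5)⟩

/-- Part 2 of the theorem, as a standalone lemma. -/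
lemma part2 (X Y : Set ℕ) (hX : DivClosed X) (hY : DivClosed Y) :
    (∀ (A : Type) (s i : A → A → A) (g : A → A),
        MemV X s i g → MemV Y s i g) ↔ X ⊆ Y := by
  constructor
  · intro h n hnX
    by_contra hnY
    have hn0 : 0 < n := hX.2.1 n hnX
    haveI : NeZero n := ⟨hn0.ne'⟩
    have hBnX : MemV X (· ∪ ·) (· ∩ ·) (cubeShift n) := fun e he => he n hnX
    have hBnY : MemV Y (· ∪ ·) (· ∩ ·) (cubeShift n) := h _ _ _ _ hBnX
    rcases Set.eq_empty_or_nonempty Y with rfl | ⟨m₀, hm₀⟩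
    · have hsat := hBnY (.var 0, .var 1) (fun m hm => absurd hm (Set.notMem_empty m))
      have h2 := hsat (fun j => if j = 0 then ∅ else Set.univ)
      simp only [RTerm.eval, if_pos rfl, if_neg one_ne_zero] at h2
      exact Set.empty_ne_univ h2
    · set l : List ℕ := hY.1.toFinset.toList with hl
      have hmem : ∀ m, m ∈ l ↔ m ∈ Y := by
        intro m
        rw [hl, Finset.mem_toList, Set.Finite.mem_toFinset]
      have hndvd : ∀ m ∈ Y, ¬ n ∣ m := by
        intro m hm hdvd
        exact hnY (hY.2.2 m hm n hdvd hn0)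
      have hvalid : ∀ m ∈ Y, Sat (· ∪ ·) (· ∩ ·) (cubeShift m) (sepIdent m₀ l) :=
        fun m hm => sepIdent_sat (Or.inr ((hmem m).2 hm))
      exact sepIdent_not_sat hn0 (hndvd m₀ hm₀)
        (fun m hm => hndvd m ((hmem m).1 hm)) (hBnY _ hvalid)
  · intro hXY A s i g hMX e he
    exact hMX e (fun n hn => he n (hXY hn))

end DRL

/-- `X ↦ V(X)` is an order isomorphism from the finite divisor-closed
subsets of `ℕ` onto the varieties of distributive rotational lattices: every
equationally defined class all of whose members are distributive rotational
lattices coincides with `V(X)` for a unique finite divisor-closed `X`, and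
`V(X) ⊆ V(Y)` iff `X ⊆ Y`. -/
theorem stmt_16 :
    (∀ E : Set (RTerm × RTerm),
      (∀ (A : Type) (s i : A → A → A) (g : A → A),
        (∀ e ∈ E, Sat s i g e) → IsDistRotLat s i g) →
      ∃! X : Set ℕ, DivClosed X ∧
        ∀ (A : Type) (s i : A → A → A) (g : A → A),
          (∀ e ∈ E, Sat s i g e) ↔ MemV X s i g) ∧
    (∀ X Y : Set ℕ, DivClosed X → DivClosed Y →
      ((∀ (A : Type) (s i : A → A → A) (g : A → A),
          MemV X s i g → MemV Y s i g) ↔ X ⊆ Y)) := by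
  constructor
  · intro E hE
    set X : Set ℕ := {n | 0 < n ∧ ∀ e ∈ E, Sat (· ∪ ·) (· ∩ ·) (cubeShift n) e} with hX
    -- `X` is finite
    have hfin : X.Finite := by
      have hPsat : ∀ e ∈ E, Sat (fun (a b : ∀ p : {n // n ∈ X}, Set (ZMod p.1)) p => a p ∪ b p)
          (fun a b p => a p ∩ b p) (fun a p => cubeShift p.1 (a p)) e :=
        fun e he => DRL.sat_pi _ _ _ (fun p => p.2.2 e he)
      obtain ⟨-, -, -, -, -, -, -, -, -, -, k, hk, hgk⟩ := hE _ _ _ _ hPsat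
      have hpt : ∀ (m : ℕ) (a : ∀ p : {n // n ∈ X}, Set (ZMod p.1)) (p : {n // n ∈ X}),
          ((fun (a : ∀ p : {n // n ∈ X}, Set (ZMod p.1)) p => cubeShift p.1 (a p))^[m] a) p
            = (cubeShift p.1)^[m] (a p) := by
        intro m
        induction m with
        | zero => intro a p; rfl
        | succ m ih =>
            intro a p
            rw [Function.iterate_succ_apply, Function.iterate_succ_apply]
            exact ih _ p
      have hsub : X ⊆ {n | n ≤ k} := by
        intro n hn
        have h1 := congrFun hgk (fun p : {n // n ∈ X} => ({0} : Set (ZMod p.1)))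
        have h2 := congrFun h1 ⟨n, hn⟩
        rw [hpt] at h2
        have h3 : ((k : ZMod n)) ∈ (cubeShift n)^[k] ({0} : Set (ZMod n)) := by
          rw [DRL.cubeShift_iterate_mem, sub_self]
          rfl
        rw [h2] at h3
        have h4 : n ∣ k := by
          rwa [id_eq, Set.mem_singleton_iff, ZMod.natCast_eq_zero_iff] at h3
        exact Nat.le_of_dvd hk h4
      exact Set.Finite.subset (Set.finite_le_nat k) hsub
    have hdc : DivClosed X := by
      refine ⟨hfin, fun n hn => hn.1, ?_⟩
      rintro n ⟨hn0, hnE⟩ m hmn hm0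
      exact ⟨hm0, fun e he => DRL.sat_cube_of_dvd hm0 hmn (hnE e he)⟩
    have hmain : ∀ (A : Type) (s i : A → A → A) (g : A → A),
        (∀ e ∈ E, Sat s i g e) ↔ MemV X s i g := by
      intro A s i g
      constructor
      · intro hA e hval v
        by_contra hne
        obtain ⟨d, hd0, φ, h1, h2, h3, hsurj, hneφ⟩ := DRL.key (hE A s i g hA) hne
        have hdX : d ∈ X :=
          ⟨hd0, fun e' he' => DRL.sat_of_surjective hsurj h1 h2 h3 (hA e' he')⟩
        apply hneφ
        rw [DRL.eval_hom h1 h2 h3 v e.1, DRL.eval_hom h1 h2 h3 v e.2]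
        exact hval d hdX (φ ∘ v)
      · intro hM e he
        exact hM e (fun n hn => hn.2 e he)
    refine ⟨X, ⟨hdc, hmain⟩, ?_⟩
    rintro Y ⟨hYdc, hYmain⟩
    have hfwd : ∀ (A : Type) (s i : A → A → A) (g : A → A), MemV Y s i g → MemV X s i g :=
      fun A s i g hM => (hmain A s i g).1 ((hYmain A s i g).2 hM)
    have hbwd : ∀ (A : Type) (s i : A → A → A) (g : A → A), MemV X s i g → MemV Y s i g :=
      fun A s i g hM => (hYmain A s i g).1 ((hmain A s i g).2 hM)
    exact Set.Subset.antisymm ((DRL.part2 Y X hYdc hdc).1 hfwd) ((DRL.part2 X Y hdc hYdc).1 hbwd)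
  · exact DRL.part2
end

section
/- For every n ≥ 1, the class of distributive rotational lattices satisfying the identity g^n(x) = x equals the variety generated by {𝔅_d : d divides n}. -/
def rotN : ℕ → RTerm
  | 0 => .var 0
  | m+1 => .rot (rotN m)

lemma rotN_eval {A : Type*} (s i : A → A → A) (g : A → A) (v : ℕ → A) (m : ℕ) :
    (rotN m).eval s i g v = g^[m] (v 0) := by
  induction m with
  | zero => rfl
  | succ m ih => rw [rotN, RTerm.eval, ih, Function.iterate_succ_apply']

lemma cubeShift_iterate (d m : ℕ) (S : Set (ZMod d)) :
    (cubeShift d)^[m] S = (· + (m : ZMod d)) '' S := by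
  induction m with
  | zero => simp
  | succ m ih =>
    rw [Function.iterate_succ_apply', ih, cubeShift, ← Set.image_comp]
    push_cast
    ext x
    simp [add_assoc]

lemma exists_primeHom {A : Type} [DistribLattice A] {a b : A} (hab : ¬ a ≤ b) :
    ∃ f : A → Prop, (∀ x y, f (x ⊔ y) ↔ f x ∨ f y) ∧ (∀ x y, f (x ⊓ y) ↔ f x ∧ f y) ∧
      f a ∧ ¬ f b := by
  let e : A → WithBot (WithTop A) := fun x => ((x : WithTop A) : WithBot (WithTop A))
  have emono : ∀ x y : A, e x ≤ e y ↔ x ≤ y := by intro x y; simp [e]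
  have hdisj : Disjoint ((Order.PFilter.principal (e a) : Order.PFilter (WithBot (WithTop A))) :
        Set (WithBot (WithTop A)))
      ((Order.Ideal.principal (e b) : Order.Ideal (WithBot (WithTop A))) :
        Set (WithBot (WithTop A))) := by
    rw [Set.disjoint_left]
    intro x hxF hxI
    have h1 : e a ≤ x := hxF
    have h2 : x ≤ e b := hxI
    exact hab ((emono a b).1 (le_trans h1 h2))
  obtain ⟨J, hJp, hIJ, hFJ⟩ := DistribLattice.prime_ideal_of_disjoint_filter_ideal hdisj
  have esup : ∀ x y : A, e (x ⊔ y) = e x ⊔ e y := by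
    intro x y; simp only [e, WithTop.coe_sup, WithBot.coe_sup]
  have einf : ∀ x y : A, e (x ⊓ y) = e x ⊓ e y := by
    intro x y; simp only [e, WithTop.coe_inf, WithBot.coe_inf]
  refine ⟨fun x => e x ∉ J, ?_, ?_, ?_, ?_⟩
  · intro x y
    simp only []
    rw [esup]
    constructor
    · intro h
      by_contra hc
      push_neg at hc
      exact h (J.sup_mem hc.1 hc.2)
    · rintro (h | h) hs
      · exact h (J.lower le_sup_left hs)
      · exact h (J.lower le_sup_right hs)
  · intro x y
    simp only []
    rw [einf]
    constructor
    · intro h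
      exact ⟨fun hx => h (J.lower inf_le_left hx), fun hy => h (J.lower inf_le_right hy)⟩
    · rintro ⟨hx, hy⟩ hs
      rcases hJp.mem_or_mem hs with h | h
      · exact hx h
      · exact hy h
  · intro hmem
    exact Set.disjoint_left.1 hFJ (Order.PFilter.mem_principal.2 le_rfl) hmem
  · intro hmem
    exact hmem (hIJ (Order.Ideal.mem_principal.2 le_rfl))

lemma forward_dir {A : Type} (s i : A → A → A) (g : A → A) (n : ℕ) (hn : 0 < n)
    (hd : IsDistRotLat s i g) (hgn : g^[n] = id) : MemV {d : ℕ | d ∣ n} s i g := by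
  obtain ⟨sc, sa, ic, ia, si, is, dist, gs, gi, -, -⟩ := hd
  rintro ⟨t1, t2⟩ he v0
  show t1.eval s i g v0 = t2.eval s i g v0
  by_contra hne
  letI : Max A := ⟨s⟩
  letI : Min A := ⟨i⟩
  letI instL : Lattice A := Lattice.mk' sc sa ic ia si is
  letI : DistribLattice A := DistribLattice.ofInfSupLe (fun a b c => le_of_eq (dist a b c))
  haveI : NeZero n := ⟨hn.ne'⟩
  -- a separating "prime filter" f
  have hsep : ∃ f : A → Prop, (∀ x y, f (x ⊔ y) ↔ f x ∨ f y) ∧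
      (∀ x y, f (x ⊓ y) ↔ f x ∧ f y) ∧
      ¬ (f (t1.eval s i g v0) ↔ f (t2.eval s i g v0)) := by
    have h1 : ¬ (t1.eval s i g v0 ≤ t2.eval s i g v0 ∧ t2.eval s i g v0 ≤ t1.eval s i g v0) :=
      fun h => hne (le_antisymm h.1 h.2)
    rcases not_and_or.1 h1 with h | h
    · obtain ⟨f, h1, h2, h3, h4⟩ := exists_primeHom h
      exact ⟨f, h1, h2, fun hiff => h4 (hiff.1 h3)⟩
    · obtain ⟨f, h1, h2, h3, h4⟩ := exists_primeHom h
      exact ⟨f, h1, h2, fun hiff => h4 (hiff.2 h3)⟩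
  obtain ⟨f, fsup, finf, fneq⟩ := hsep
  -- iterates of g
  have gms : ∀ (m : ℕ) (x y : A), g^[m] (s x y) = s (g^[m] x) (g^[m] y) := by
    intro m
    induction m with
    | zero => intro x y; rfl
    | succ m ih =>
      intro x y
      rw [Function.iterate_succ_apply', Function.iterate_succ_apply',
        Function.iterate_succ_apply', ih, gs]
  have gmi : ∀ (m : ℕ) (x y : A), g^[m] (i x y) = i (g^[m] x) (g^[m] y) := by
    intro m
    induction m with
    | zero => intro x y; rfl
    | succ m ih =>
      intro x y
      rw [Function.iterate_succ_apply', Function.iterate_succ_apply',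
        Function.iterate_succ_apply', ih, gi]
  have key : ∀ m : ℕ, g^[m] = g^[m % n] := by
    intro m
    conv_lhs => rw [← Nat.mod_add_div m n]
    rw [Function.iterate_add, Function.iterate_mul, hgn, Function.iterate_id,
      Function.comp_id]
  have hcast : ∀ (m m' : ℕ) (x : A), (m : ZMod n) = (m' : ZMod n) → g^[m] x = g^[m'] x := by
    intro m m' x hmm
    have h2 : m % n = m' % n := (ZMod.natCast_eq_natCast_iff m m' n).1 hmm
    rw [key m, key m', h2]
  -- the homomorphism into the rotational cube
  let h : A → Set (ZMod n) := fun x => {k : ZMod n | f (g^[(-k).val] x)}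
  have hsup : ∀ x y, h (s x y) = h x ∪ h y := by
    intro x y
    ext k
    show f (g^[(-k).val] (s x y)) ↔ _ ∨ _
    rw [gms]
    exact fsup _ _
  have hinf : ∀ x y, h (i x y) = h x ∩ h y := by
    intro x y
    ext k
    show f (g^[(-k).val] (i x y)) ↔ _ ∧ _
    rw [gmi]
    exact finf _ _
  have hvalcast : ∀ k : ZMod n, (((-k).val : ℕ) : ZMod n) = -k :=
    fun k => ZMod.natCast_rightInverse _
  have hsucc : ∀ (m : ℕ) (y : A), g^[m] (g y) = g^[m+1] y := by
    intro m y
    rw [Function.iterate_succ_apply]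
  have hrot : ∀ x, h (g x) = cubeShift n (h x) := by
    intro x
    ext k
    constructor
    · intro hk
      have hk1 : f (g^[(-k).val + 1] x) := by
        rw [← hsucc]
        exact hk
      refine ⟨k - 1, ?_, by ring⟩
      show f (g^[(-(k-1)).val] x)
      have e : g^[(-(k-1)).val] x = g^[(-k).val + 1] x := by
        apply hcast
        push_cast
        rw [hvalcast, hvalcast]
        ring
      rw [e]
      exact hk1
    · rintro ⟨j, hj, rfl⟩
      show f (g^[(-(j+1)).val] (g x))
      rw [hsucc]
      have e : g^[(-(j+1)).val + 1] x = g^[(-j).val] x := by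
        apply hcast
        push_cast
        rw [hvalcast, hvalcast]
        ring
      rw [e]
      exact hj
  have heval : ∀ t : RTerm,
      h (t.eval s i g v0) = t.eval (· ∪ ·) (· ∩ ·) (cubeShift n) (fun k => h (v0 k)) := by
    intro t
    induction t with
    | var k => rfl
    | sup u1 u2 ih1 ih2 => show h (s _ _) = _ ∪ _; rw [hsup, ih1, ih2]
    | inf u1 u2 ih1 ih2 => show h (i _ _) = _ ∩ _; rw [hinf, ih1, ih2]
    | rot u ih => show h (g _) = cubeShift n _; rw [hrot, ih]
  have hcube := he n (dvd_refl n) (fun k => h (v0 k))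
  have hab : h (t1.eval s i g v0) = h (t2.eval s i g v0) := by
    rw [heval t1, heval t2]
    exact hcube
  apply fneq
  have h0 : ((0:ZMod n) ∈ h (t1.eval s i g v0)) ↔ ((0:ZMod n) ∈ h (t2.eval s i g v0)) := by
    rw [hab]
  simpa only [h, Set.mem_setOf_eq, neg_zero, ZMod.val_zero, Function.iterate_zero, id] using h0


/-- For every `n ≥ 1`, the class `D_n` of distributive rotational
lattices satisfying `gⁿ(x) = x` equals the variety generated by
`{𝔅_d : d ∣ n}`. -/
theorem stmt_17 (n : ℕ) (hn : 0 < n) :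
    ∀ (A : Type) (s i : A → A → A) (g : A → A),
      (IsDistRotLat s i g ∧ g^[n] = id) ↔ MemV {d : ℕ | d ∣ n} s i g := by
  intro A s i g
  constructor
  · rintro ⟨hd, hgn⟩
    exact forward_dir s i g n hn hd hgn
  · intro hM
    have key : ∀ t1 t2 : RTerm,
        (∀ (d : ℕ), d ∣ n → ∀ v : ℕ → Set (ZMod d),
          t1.eval (· ∪ ·) (· ∩ ·) (cubeShift d) v = t2.eval (· ∪ ·) (· ∩ ·) (cubeShift d) v) →
        ∀ v : ℕ → A, t1.eval s i g v = t2.eval s i g v :=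
      fun t1 t2 hc v => hM (t1, t2) (fun d hdn => hc d hdn) v
    have hgn : g^[n] = id := by
      funext x
      have hc : ∀ (d : ℕ), d ∣ n → ∀ v : ℕ → Set (ZMod d),
          (rotN n).eval (· ∪ ·) (· ∩ ·) (cubeShift d) v
            = (RTerm.var 0).eval (· ∪ ·) (· ∩ ·) (cubeShift d) v := by
        intro d hdn v
        rw [rotN_eval, cubeShift_iterate]
        obtain ⟨c, rfl⟩ := hdn
        have hz : ((d * c : ℕ) : ZMod d) = 0 := by
          push_cast [ZMod.natCast_self]
          ring
        rw [hz]
        simp [RTerm.eval]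
      have := key (rotN n) (.var 0) hc (fun _ => x)
      rw [rotN_eval] at this
      simpa [RTerm.eval] using this
    have hbij : Function.Bijective g := by
      have e1 : g^[n-1] ∘ g = id := by
        rw [← Function.iterate_succ]
        rw [show (n-1).succ = n by omega]
        exact hgn
      have e2 : g ∘ g^[n-1] = id := by
        rw [← Function.iterate_succ']
        rw [show (n-1).succ = n by omega]
        exact hgn
      exact Function.bijective_iff_has_inverse.mpr ⟨g^[n-1], congrFun e1, congrFun e2⟩
    refine ⟨⟨?_, ?_, ?_, ?_, ?_, ?_, ?_, ?_, ?_, hbij, ⟨n, hn, hgn⟩⟩, hgn⟩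
    · intro x y
      have := key (.sup (.var 0) (.var 1)) (.sup (.var 1) (.var 0))
        (fun d _ v => by ext z; simp [RTerm.eval]; tauto)
        (fun k => if k = 0 then x else y)
      simpa [RTerm.eval] using this
    · intro x y z
      have := key (.sup (.sup (.var 0) (.var 1)) (.var 2))
        (.sup (.var 0) (.sup (.var 1) (.var 2)))
        (fun d _ v => by ext w; simp [RTerm.eval]; tauto)
        (fun k => if k = 0 then x else if k = 1 then y else z)
      simpa [RTerm.eval] using this
    · intro x y
      have := key (.inf (.var 0) (.var 1)) (.inf (.var 1) (.var 0))
        (fun d _ v => by ext z; simp [RTerm.eval]; tauto)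
        (fun k => if k = 0 then x else y)
      simpa [RTerm.eval] using this
    · intro x y z
      have := key (.inf (.inf (.var 0) (.var 1)) (.var 2))
        (.inf (.var 0) (.inf (.var 1) (.var 2)))
        (fun d _ v => by ext w; simp [RTerm.eval]; tauto)
        (fun k => if k = 0 then x else if k = 1 then y else z)
      simpa [RTerm.eval] using this
    · intro x y
      have := key (.sup (.var 0) (.inf (.var 0) (.var 1))) (.var 0)
        (fun d _ v => by ext z; simp [RTerm.eval]; tauto)
        (fun k => if k = 0 then x else y)
      simpa [RTerm.eval] using this
    · intro x y
      have := key (.inf (.var 0) (.sup (.var 0) (.var 1))) (.var 0)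
        (fun d _ v => by ext z; simp [RTerm.eval]; tauto)
        (fun k => if k = 0 then x else y)
      simpa [RTerm.eval] using this
    · intro x y z
      have := key (.inf (.var 0) (.sup (.var 1) (.var 2)))
        (.sup (.inf (.var 0) (.var 1)) (.inf (.var 0) (.var 2)))
        (fun d _ v => by ext w; simp [RTerm.eval]; tauto)
        (fun k => if k = 0 then x else if k = 1 then y else z)
      simpa [RTerm.eval] using this
    · intro x y
      have := key (.rot (.sup (.var 0) (.var 1))) (.sup (.rot (.var 0)) (.rot (.var 1)))
        (fun d _ v => by simp [RTerm.eval, cubeShift, Set.image_union])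
        (fun k => if k = 0 then x else y)
      simpa [RTerm.eval] using this
    · intro x y
      have := key (.rot (.inf (.var 0) (.var 1))) (.inf (.rot (.var 0)) (.rot (.var 1)))
        (fun d _ v => by
          simp only [RTerm.eval, cubeShift]
          exact Set.image_inter (add_left_injective 1))
        (fun k => if k = 0 then x else y)
      simpa [RTerm.eval] using this
end
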